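/- Let Y be a random variable distributed as a · x where x is uniform on the cube [-1,1]^d and a is a unit vector in ℝ^d. For any 0 ≤ t ≤ 1/2, there is a universal constant c > 0 such that E[Y | Y ≥ t] ≥ t + c. -/

import Mathlib

open MeasureTheory Set

noncomputable section

namespace Stmt8Aux

abbrev nu : Measure ℝ := volume.restrict (Icc (-1) 1)
abbrev pim (d : ℕ) : Measure (Fin d → ℝ) := Measure.pi fun _ => nu
abbrev cube (d : ℕ) : Set (Fin d → ℝ) := univ.pi fun _ => Icc (-1) 1

instance : IsFiniteMeasure nu := by
  constructor
  rw [Measure.restrict_apply_univ, Real.volume_Icc]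
  norm_num

lemma mom (k : ℕ) : ∫ x in Icc (-1:ℝ) 1, x^k = (1 - (-1:ℝ)^(k+1))/(k+1) := by
  rw [MeasureTheory.integral_Icc_eq_integral_Ioc,
    ← intervalIntegral.integral_of_le (by norm_num : (-1:ℝ) ≤ 1)]
  rw [integral_pow]; ring

lemma nu_univ : nu univ = 2 := by
  rw [Measure.restrict_apply_univ, Real.volume_Icc]
  norm_num

lemma pim_eq (d : ℕ) : pim d = volume.restrict (cube d) := by
  refine Measure.pi_eq fun s hs => ?_
  rw [Measure.restrict_apply (MeasurableSet.univ_pi hs)]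
  rw [show univ.pi s ∩ cube d = univ.pi (fun i => s i ∩ Icc (-1) 1) from (Set.pi_inter_distrib).symm]
  rw [volume_pi_pi]
  exact Finset.prod_congr rfl fun i _ => (Measure.restrict_apply (hs i)).symm

lemma pim_univ (d : ℕ) : pim d univ = 2^d := by
  rw [Measure.pi_univ]
  simp only [nu_univ, Finset.prod_const, Finset.card_univ, Fintype.card_fin]

instance (d : ℕ) : IsFiniteMeasure (pim d) := by
  constructor; rw [pim_univ]; exact ENNReal.pow_lt_top (n := d) (by norm_num)

lemma pim_univ_toReal (d : ℕ) : (pim d univ).toReal = 2^d := by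
  rw [pim_univ]; simp

lemma contS {d : ℕ} (a : Fin d → ℝ) : Continuous (fun z : Fin d → ℝ => ∑ i, a i * z i) :=
  continuous_finset_sum _ fun i _ => continuous_const.mul (continuous_apply i)

lemma integ {d : ℕ} (f : (Fin d → ℝ) → ℝ) (hf : Continuous f) : Integrable f (pim d) := by
  rw [pim_eq]
  exact hf.continuousOn.integrableOn_compact (isCompact_univ_pi fun _ => isCompact_Icc)

lemma integ1 (f : ℝ → ℝ) (hf : Continuous f) : Integrable f nu :=
  hf.continuousOn.integrableOn_compact isCompact_Icc

lemma integ_prod {d : ℕ} (f : ℝ × (Fin d → ℝ) → ℝ) (hf : Continuous f) :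
    Integrable f (nu.prod (pim d)) := by
  rw [pim_eq, Measure.prod_restrict]
  exact hf.continuousOn.integrableOn_compact
    (isCompact_Icc.prod (isCompact_univ_pi fun _ => isCompact_Icc))

lemma cont_insertNth {d : ℕ} :
    Continuous (fun p : ℝ × (Fin d → ℝ) => (Fin.insertNth 0 p.1 p.2 : Fin (d+1) → ℝ)) := by
  exact Continuous.finInsertNth (A := fun _ : Fin (d+1) => ℝ) 0 continuous_fst continuous_snd

lemma split (d : ℕ) (f : (Fin (d+1) → ℝ) → ℝ) (hf : Continuous f) :
    ∫ x, f x ∂pim (d+1)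
      = ∫ y in Icc (-1:ℝ) 1, (∫ z, f (Fin.insertNth 0 y z) ∂pim d) := by
  have hmp := (MeasureTheory.measurePreserving_piFinSuccAbove (fun _ : Fin (d+1) => nu) 0)
  have h1 := (hmp.symm _).integral_comp
    (MeasurableEquiv.measurableEmbedding _) f
  rw [← h1]
  have h2 : ∀ p : ℝ × (Fin d → ℝ),
      f ((MeasurableEquiv.piFinSuccAbove (fun _ => ℝ) 0).symm p) = f (Fin.insertNth 0 p.1 p.2) := by
    intro p
    rw [MeasurableEquiv.piFinSuccAbove_symm_apply]
    rfl
  simp_rw [h2]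
  exact integral_prod _ (integ_prod _ (hf.comp cont_insertNth))

lemma mom1 : ∫ y in Icc (-1:ℝ) 1, y = 0 := by have := mom 1; simpa using this
lemma mom2 : ∫ y in Icc (-1:ℝ) 1, y^2 = 2/3 := by have := mom 2; norm_num at this; simpa using this
lemma mom3 : ∫ y in Icc (-1:ℝ) 1, y^3 = 0 := by have := mom 3; norm_num at this; simpa using this
lemma mom4 : ∫ y in Icc (-1:ℝ) 1, y^4 = 2/5 := by have := mom 4; norm_num at this; simpa using this

lemma sum_insertNth {d : ℕ} (a : Fin (d+1) → ℝ) (y : ℝ) (z : Fin d → ℝ) :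
    ∑ i, a i * (Fin.insertNth (α := fun _ : Fin (d+1) => ℝ) 0 y z) i
      = a 0 * y + ∑ j, a (Fin.succAbove 0 j) * z j := by
  rw [Fin.sum_univ_succAbove (fun i => a i * Fin.insertNth (α := fun _ : Fin (d+1) => ℝ) 0 y z i) 0]
  simp

lemma int_nu_poly (c0 c1 c2 c3 c4 : ℝ) :
    ∫ y in Icc (-1:ℝ) 1, (c0 + c1*y + c2*y^2 + c3*y^3 + c4*y^4)
      = 2*c0 + (2/3)*c2 + (2/5)*c4 := by
  have I : ∀ (f : ℝ → ℝ), Continuous f → Integrable f nu := integ1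
  rw [integral_add (I _ (by continuity)) (I _ (by continuity)),
      integral_add (I _ (by continuity)) (I _ (by continuity)),
      integral_add (I _ (by continuity)) (I _ (by continuity)),
      integral_add (I _ (by continuity)) (I _ (by continuity)),
      integral_const_mul, integral_const_mul, integral_const_mul, integral_const_mul,
      mom1, mom2, mom3, mom4, integral_const]
  have h2 : (nu univ).toReal = 2 := by
    simp [Real.volume_Icc]; norm_num
  rw [measureReal_def, h2, smul_eq_mul]
  ring

lemma int_pim_polyS (d : ℕ) (b : Fin d → ℝ) (c0 c1 c2 c3 c4 : ℝ) :
    ∫ z, (c0 + c1*(∑ i, b i * z i) + c2*(∑ i, b i * z i)^2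
        + c3*(∑ i, b i * z i)^3 + c4*(∑ i, b i * z i)^4) ∂pim d
      = 2^d*c0 + c1*(∫ z, (∑ i, b i * z i) ∂pim d)
        + c2*(∫ z, (∑ i, b i * z i)^2 ∂pim d)
        + c3*(∫ z, (∑ i, b i * z i)^3 ∂pim d)
        + c4*(∫ z, (∑ i, b i * z i)^4 ∂pim d) := by
  have hc := contS b
  rw [integral_add (integ _ (by continuity)) (integ _ (by continuity)),
      integral_add (integ _ (by continuity)) (integ _ (by continuity)),
      integral_add (integ _ (by continuity)) (integ _ (by continuity)),
      integral_add (integ _ (by continuity)) (integ _ (by continuity)),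
      integral_const_mul, integral_const_mul, integral_const_mul, integral_const_mul,
      integral_const, measureReal_def, pim_univ_toReal, smul_eq_mul]

lemma meanS : ∀ (d : ℕ) (a : Fin d → ℝ), ∫ x, (∑ i, a i * x i) ∂pim d = 0 := by
  intro d
  induction d with
  | zero => intro a; simp
  | succ d ih =>
    intro a
    rw [split d _ (contS a)]
    have hinner : ∀ y : ℝ,
        (∫ z, (∑ i, a i * (Fin.insertNth (α := fun _ : Fin (d+1) => ℝ) 0 y z) i) ∂pim d)
          = (0:ℝ) + (2^d * a 0)*y + 0*y^2 + 0*y^3 + 0*y^4 := by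
      intro y
      have e : (fun z : Fin d → ℝ => ∑ i, a i * (Fin.insertNth (α := fun _ : Fin (d+1) => ℝ) 0 y z) i)
          = fun z => ((a 0 * y) + 1*(∑ j, a (Fin.succAbove 0 j) * z j)
            + 0*(∑ j, a (Fin.succAbove 0 j) * z j)^2
            + 0*(∑ j, a (Fin.succAbove 0 j) * z j)^3
            + 0*(∑ j, a (Fin.succAbove 0 j) * z j)^4) := by
        funext z; rw [sum_insertNth]; ring
      rw [e, int_pim_polyS, ih]
      ring
    simp_rw [hinner]
    rw [int_nu_poly]
    ring

lemma m2 : ∀ (d : ℕ) (a : Fin d → ℝ), ∫ x, (∑ i, a i * x i)^2 ∂pim d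
    = 2^d/3 * ∑ i, (a i)^2 := by
  intro d
  induction d with
  | zero => intro a; simp
  | succ d ih =>
    intro a
    rw [split d (fun x => (∑ i, a i * x i)^2) ((contS a).pow 2)]
    have hinner : ∀ y : ℝ,
        (∫ z, (∑ i, a i * (Fin.insertNth (α := fun _ : Fin (d+1) => ℝ) 0 y z) i)^2 ∂pim d)
          = (2^d/3 * ∑ j, (a (Fin.succAbove 0 j))^2) + 0*y + (2^d * (a 0)^2)*y^2
            + 0*y^3 + 0*y^4 := by
      intro y
      have e : (fun z : Fin d → ℝ =>
            (∑ i, a i * (Fin.insertNth (α := fun _ : Fin (d+1) => ℝ) 0 y z) i)^2)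
          = fun z => ((a 0 * y)^2 + (2*(a 0 * y))*(∑ j, a (Fin.succAbove 0 j) * z j)
            + 1*(∑ j, a (Fin.succAbove 0 j) * z j)^2
            + 0*(∑ j, a (Fin.succAbove 0 j) * z j)^3
            + 0*(∑ j, a (Fin.succAbove 0 j) * z j)^4) := by
        funext z; rw [sum_insertNth]; ring
      rw [e, int_pim_polyS, ih, meanS]
      ring
    simp_rw [hinner]
    rw [int_nu_poly, Fin.sum_univ_succAbove (fun i => (a i)^2) 0]
    ring

lemma m3 : ∀ (d : ℕ) (a : Fin d → ℝ), ∫ x, (∑ i, a i * x i)^3 ∂pim d = 0 := by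
  intro d
  induction d with
  | zero => intro a; simp
  | succ d ih =>
    intro a
    rw [split d (fun x => (∑ i, a i * x i)^3) ((contS a).pow 3)]
    have hinner : ∀ y : ℝ,
        (∫ z, (∑ i, a i * (Fin.insertNth (α := fun _ : Fin (d+1) => ℝ) 0 y z) i)^3 ∂pim d)
          = (0:ℝ) + (2^d * (a 0) * ∑ j, (a (Fin.succAbove 0 j))^2)*y + 0*y^2
            + (2^d * (a 0)^3)*y^3 + 0*y^4 := by
      intro y
      have e : (fun z : Fin d → ℝ =>
            (∑ i, a i * (Fin.insertNth (α := fun _ : Fin (d+1) => ℝ) 0 y z) i)^3)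
          = fun z => ((a 0 * y)^3 + (3*(a 0 * y)^2)*(∑ j, a (Fin.succAbove 0 j) * z j)
            + (3*(a 0 * y))*(∑ j, a (Fin.succAbove 0 j) * z j)^2
            + 1*(∑ j, a (Fin.succAbove 0 j) * z j)^3
            + 0*(∑ j, a (Fin.succAbove 0 j) * z j)^4) := by
        funext z; rw [sum_insertNth]; ring
      rw [e, int_pim_polyS, ih, meanS, m2]
      ring
    simp_rw [hinner]
    rw [int_nu_poly]
    ring

lemma m4 : ∀ (d : ℕ) (a : Fin d → ℝ), ∫ x, (∑ i, a i * x i)^4 ∂pim d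
    ≤ 2^d/3 * (∑ i, (a i)^2)^2 := by
  intro d
  induction d with
  | zero => intro a; simp
  | succ d ih =>
    intro a
    rw [split d (fun x => (∑ i, a i * x i)^4) ((contS a).pow 4)]
    have hinner : ∀ y : ℝ,
        (∫ z, (∑ i, a i * (Fin.insertNth (α := fun _ : Fin (d+1) => ℝ) 0 y z) i)^4 ∂pim d)
          = (∫ z, (∑ j, a (Fin.succAbove 0 j) * z j)^4 ∂pim d) + 0*y
            + (2*2^d*(a 0)^2 * ∑ j, (a (Fin.succAbove 0 j))^2)*y^2
            + 0*y^3 + (2^d * (a 0)^4)*y^4 := by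
      intro y
      have e : (fun z : Fin d → ℝ =>
            (∑ i, a i * (Fin.insertNth (α := fun _ : Fin (d+1) => ℝ) 0 y z) i)^4)
          = fun z => ((a 0 * y)^4 + (4*(a 0 * y)^3)*(∑ j, a (Fin.succAbove 0 j) * z j)
            + (6*(a 0 * y)^2)*(∑ j, a (Fin.succAbove 0 j) * z j)^2
            + (4*(a 0 * y))*(∑ j, a (Fin.succAbove 0 j) * z j)^3
            + 1*(∑ j, a (Fin.succAbove 0 j) * z j)^4) := by
        funext z; rw [sum_insertNth]; ring
      rw [e, int_pim_polyS, meanS, m2, m3]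
      ring
    simp_rw [hinner]
    rw [int_nu_poly, Fin.sum_univ_succAbove (fun i => (a i)^2) 0]
    have hJ := ih (fun j => a (Fin.succAbove 0 j))
    have hQ : (0:ℝ) ≤ ∑ j, (a (Fin.succAbove 0 j))^2 :=
      Finset.sum_nonneg fun j _ => sq_nonneg _
    have hP : (0:ℝ) < 2^d := by positivity
    rw [show ((2:ℝ)^(d+1)) = 2^d * 2 from pow_succ 2 d]
    nlinarith [sq_nonneg (a 0), sq_nonneg ((a 0)^2),
      mul_nonneg hP.le (sq_nonneg ((a 0)^2)), mul_nonneg (mul_nonneg hP.le (sq_nonneg (a 0))) hQ]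

lemma symm_int (d : ℕ) (a : Fin d → ℝ) (g : ℝ → ℝ) :
    ∫ x in cube d, g (-(∑ i, a i * x i)) = ∫ x in cube d, g (∑ i, a i * x i) := by
  have hcube : MeasurableSet (cube d) := MeasurableSet.univ_pi fun _ => measurableSet_Icc
  rw [← integral_indicator hcube, ← integral_indicator hcube]
  rw [← integral_neg_eq_self ((cube d).indicator (fun x => g (∑ i, a i * x i))) volume]
  congr 1
  funext x
  have hmem : (-x ∈ cube d) ↔ x ∈ cube d := by
    simp only [mem_univ_pi, Pi.neg_apply, mem_Icc]
    constructor <;> (intro h i; constructor <;> linarith [(h i).1, (h i).2])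
  by_cases hx : x ∈ cube d
  · rw [indicator_of_mem hx, indicator_of_mem (hmem.mpr hx)]
    congr 1
    simp [mul_neg, ← Finset.sum_neg_distrib]
  · rw [indicator_of_notMem hx, indicator_of_notMem (fun h => hx (hmem.mp h))]

lemma key (v : ℝ) (hv : 0 ≤ v) :
    (v^2 - (26/15*v^2 + 15/26)/4 - v^4/9)/3 ≤ max (v - 1/2) 0 := by
  rcases le_total v (1/2) with h | h
  · rw [max_eq_right (by linarith)]
    nlinarith [sq_nonneg (26*v - 15), sq_nonneg v, sq_nonneg (v^2), mul_nonneg hv (mul_nonneg hv hv)]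
  · rw [max_eq_left (by linarith)]
    nlinarith [sq_nonneg (26*v - 15), mul_nonneg (sub_nonneg.2 h) (sq_nonneg (v - 1)),
      sq_nonneg (v - 17/16), mul_nonneg (sub_nonneg.2 h) (sq_nonneg v)]

lemma pointwise (u : ℝ) :
    (u^2 - (26/15*u^2 + 15/26)/4 - u^4/9)/3
      ≤ max (u - 1/2) 0 + max (-u - 1/2) 0 := by
  rcases le_total 0 u with h | h
  · have h2 : max (-u - 1/2) 0 = 0 := max_eq_right (by linarith)
    rw [h2, add_zero]
    exact key u h
  · have h2 : max (u - 1/2) 0 = 0 := max_eq_right (by linarith)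
    rw [h2, zero_add]
    have := key (-u) (by linarith)
    calc (u^2 - (26/15*u^2 + 15/26)/4 - u^4/9)/3
        = ((-u)^2 - (26/15*(-u)^2 + 15/26)/4 - (-u)^4/9)/3 := by ring
      _ ≤ max (-u - 1/2) 0 := this

lemma vol_cube (d : ℕ) : volume (cube d) = 2^d := by
  rw [volume_pi_pi]
  simp only [Real.volume_Icc, Finset.prod_const, Finset.card_univ, Fintype.card_fin]
  norm_num

end Stmt8Aux

open Stmt8Aux

theorem stmt8 :
    ∃ c : ℝ, 0 < c ∧
      ∀ (d : ℕ) (a : Fin d → ℝ), (∑ i, a i ^ 2 = 1) →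
        ∀ t : ℝ, 0 ≤ t → t ≤ 1 / 2 →
          (∫ x in {x : Fin d → ℝ |
              (∀ i, x i ∈ Icc (-1 : ℝ) 1) ∧ ∑ i, a i * x i ≥ t}, ∑ i, a i * x i) /
            (volume {x : Fin d → ℝ |
              (∀ i, x i ∈ Icc (-1 : ℝ) 1) ∧ ∑ i, a i * x i ≥ t}).toReal
          ≥ t + c := by
  refine ⟨1/1000, by norm_num, ?_⟩
  intro d a ha t ht0 ht12
  set A : Set (Fin d → ℝ) := {x : Fin d → ℝ |
      (∀ i, x i ∈ Icc (-1 : ℝ) 1) ∧ ∑ i, a i * x i ≥ t} with hA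
  have hsub : A ⊆ cube d := fun x hx => Set.mem_univ_pi.mpr hx.1
  have hclosedA : IsClosed A := by
    have h1 : IsClosed {x : Fin d → ℝ | ∀ i, x i ∈ Icc (-1:ℝ) 1} := by
      have he : {x : Fin d → ℝ | ∀ i, x i ∈ Icc (-1:ℝ) 1} = cube d := by
        ext x; simp [Set.mem_univ_pi, Pi.le_def, forall_and]
      rw [he]; exact isClosed_set_pi fun i _ => isClosed_Icc
    have h2 : IsClosed {x : Fin d → ℝ | t ≤ ∑ i, a i * x i} :=
      isClosed_le continuous_const (contS a)
    have he2 : A = {x : Fin d → ℝ | ∀ i, x i ∈ Icc (-1:ℝ) 1}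
        ∩ {x : Fin d → ℝ | t ≤ ∑ i, a i * x i} := rfl
    rw [he2]; exact h1.inter h2
  have hmeasA : MeasurableSet A := hclosedA.measurableSet
  have hmeasC : MeasurableSet (cube d) := MeasurableSet.univ_pi fun _ => measurableSet_Icc
  have hcompC : IsCompact (cube d) := isCompact_univ_pi fun _ => isCompact_Icc
  have hcomp : IsCompact A := hcompC.of_isClosed_subset hclosedA hsub
  have IA : ∀ f : (Fin d → ℝ) → ℝ, Continuous f → IntegrableOn f A volume :=
    fun f hf => hf.continuousOn.integrableOn_compact hcomp
  have IC : ∀ f : (Fin d → ℝ) → ℝ, Continuous f → IntegrableOn f (cube d) volume :=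
    fun f hf => hf.continuousOn.integrableOn_compact hcompC
  have hvle : volume A ≤ 2^d := (measure_mono hsub).trans (vol_cube d).le
  have hvlt : volume A < ⊤ := lt_of_le_of_lt hvle (ENNReal.pow_lt_top (n := d) (by norm_num))
  have habs : ∀ i, a i ≤ 1 ∧ -1 ≤ a i := by
    intro i
    have h1 : a i ^ 2 ≤ 1 := by
      rw [← ha]
      exact Finset.single_le_sum (f := fun i => a i ^ 2) (fun j _ => sq_nonneg _)
        (Finset.mem_univ i)
    constructor <;> nlinarith
  have hvpos : 0 < volume A := by
    set s : Fin d → Set ℝ := fun i => if 0 ≤ a i then Icc (3/4) 1 else Icc (-1) (-3/4) with hs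
    have hBsub : univ.pi s ⊆ A := by
      intro x hx
      rw [Set.mem_univ_pi] at hx
      constructor
      · intro i
        have hxi := hx i
        by_cases hai : 0 ≤ a i
        · rw [hs] at hxi; simp only [if_pos hai, mem_Icc] at hxi
          exact ⟨by linarith [hxi.1], hxi.2⟩
        · rw [hs] at hxi; simp only [if_neg hai, mem_Icc] at hxi
          exact ⟨hxi.1, by linarith [hxi.2]⟩
      · show (∑ i, a i * x i) ≥ t
        have hterm : ∀ i, 3/4 * (a i)^2 ≤ a i * x i := by
          intro i
          have hxi := hx i
          by_cases hai : 0 ≤ a i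
          · rw [hs] at hxi; simp only [if_pos hai, mem_Icc] at hxi
            nlinarith [(habs i).1, hxi.1, hxi.2]
          · rw [hs] at hxi; simp only [if_neg hai, mem_Icc] at hxi
            push_neg at hai
            nlinarith [(habs i).2, hxi.1, hxi.2]
        have hsumge : 3/4 ≤ ∑ i, a i * x i := by
          calc (3:ℝ)/4 = 3/4 * ∑ i, (a i)^2 := by rw [ha]; ring
            _ = ∑ i, 3/4 * (a i)^2 := by rw [Finset.mul_sum]
            _ ≤ ∑ i, a i * x i := Finset.sum_le_sum fun i _ => hterm i
        linarith
    have hvs : ∀ i, volume (s i) = ENNReal.ofReal (1/4) := by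
      intro i; rw [hs]; by_cases hai : 0 ≤ a i
      · simp only [if_pos hai, Real.volume_Icc]; norm_num
      · simp only [if_neg hai, Real.volume_Icc]; norm_num
    have hBvol : volume (univ.pi s) = ENNReal.ofReal (1/4) ^ d := by
      rw [volume_pi_pi]
      simp only [hvs, Finset.prod_const, Finset.card_univ, Fintype.card_fin]
    have hBpos : 0 < volume (univ.pi s) := by
      rw [hBvol]
      exact ENNReal.pow_pos (ENNReal.ofReal_pos.2 (by norm_num)) d
    exact lt_of_lt_of_le hBpos (measure_mono hBsub)
  set vA := (volume A).toReal with hvA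
  have hvA_pos : 0 < vA := ENNReal.toReal_pos hvpos.ne' hvlt.ne
  have hvA_le : vA ≤ 2^d := by
    calc vA ≤ ((2:ENNReal)^d).toReal :=
          ENNReal.toReal_mono (ENNReal.pow_lt_top (n := d) (by norm_num)).ne hvle
      _ = 2^d := by simp
  have hsplit : ∫ x in A, (∑ i, a i * x i)
      = (∫ x in A, (∑ i, a i * x i - t)) + t * vA := by
    calc ∫ x in A, (∑ i, a i * x i)
        = ∫ x in A, ((∑ i, a i * x i - t) + t) := by
          apply setIntegral_congr_fun hmeasA
          intro x _; ring
      _ = (∫ x in A, (∑ i, a i * x i - t)) + ∫ _x in A, (t:ℝ) :=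
          integral_add (IA _ ((contS a).sub continuous_const)) (integrableOn_const hvlt.ne)
      _ = (∫ x in A, (∑ i, a i * x i - t)) + t * vA := by
          rw [setIntegral_const, measureReal_def, smul_eq_mul, ← hvA]; ring
  have hcontmax : Continuous (fun x : Fin d → ℝ => max (∑ i, a i * x i - t) 0) :=
    ((contS a).sub continuous_const).max continuous_const
  have hcontmax2 : Continuous (fun x : Fin d → ℝ => max (∑ i, a i * x i - 1/2) 0) :=
    ((contS a).sub continuous_const).max continuous_const
  have hcontmax3 : Continuous (fun x : Fin d → ℝ => max (-(∑ i, a i * x i) - 1/2) 0) :=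
    (((contS a).neg).sub continuous_const).max continuous_const
  have hN : ∫ x in cube d, max (∑ i, a i * x i - t) 0
      = ∫ x in A, (∑ i, a i * x i - t) := by
    have e1 : ∫ x in A, max (∑ i, a i * x i - t) 0 = ∫ x in A, (∑ i, a i * x i - t) :=
      setIntegral_congr_fun hmeasA fun x hx => max_eq_left (by linarith [hx.2])
    have e2 : ∫ x in cube d \ A, max (∑ i, a i * x i - t) 0 = 0 := by
      have he : EqOn (fun x : Fin d → ℝ => max (∑ i, a i * x i - t) 0)
          (fun _ => (0:ℝ)) (cube d \ A) := by
        intro x hx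
        have hge : ¬ t ≤ ∑ i, a i * x i := fun hge =>
          hx.2 ⟨fun i => Set.mem_univ_pi.1 hx.1 i, hge⟩
        exact max_eq_right (by linarith [not_le.1 hge])
      rw [setIntegral_congr_fun (hmeasC.diff hmeasA) he, integral_zero]
    rw [show cube d = A ∪ (cube d \ A) from (union_diff_cancel hsub).symm,
      setIntegral_union disjoint_sdiff_right (hmeasC.diff hmeasA) (IA _ hcontmax)
        ((IC _ hcontmax).mono_set diff_subset), e1, e2, add_zero]
  have hmono : ∫ x in cube d, max (∑ i, a i * x i - 1/2) 0
      ≤ ∫ x in cube d, max (∑ i, a i * x i - t) 0 :=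
    setIntegral_mono_on (IC _ hcontmax2) (IC _ hcontmax) hmeasC
      fun x _ => max_le_max (by linarith) le_rfl
  have hsymm : ∫ x in cube d, max (-(∑ i, a i * x i) - 1/2) 0
      = ∫ x in cube d, max ((∑ i, a i * x i) - 1/2) 0 :=
    symm_int d a (fun u => max (u - 1/2) 0)
  have hPval : 2^d * (1/500) ≤ ∫ x in cube d,
      ((∑ i, a i * x i)^2 - (26/15*(∑ i, a i * x i)^2 + 15/26)/4 - (∑ i, a i * x i)^4/9)/3 := by
    have e : (fun x : Fin d → ℝ =>
          ((∑ i, a i * x i)^2 - (26/15*(∑ i, a i * x i)^2 + 15/26)/4 - (∑ i, a i * x i)^4/9)/3)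
        = fun x => (-5/104) + 0*(∑ i, a i * x i) + (17/90)*(∑ i, a i * x i)^2
          + 0*(∑ i, a i * x i)^3 + (-1/27)*(∑ i, a i * x i)^4 := by
      funext x; ring
    rw [show (volume : Measure (Fin d → ℝ)).restrict (cube d) = pim d from (pim_eq d).symm]
    rw [e, int_pim_polyS, meanS, m2, m3, ha]
    have h4 := m4 d a
    rw [ha] at h4
    norm_num at h4 ⊢
    have hP : (0:ℝ) < 2^d := by positivity
    nlinarith [h4, hP]
  have hptint : ∫ x in cube d,
      ((∑ i, a i * x i)^2 - (26/15*(∑ i, a i * x i)^2 + 15/26)/4 - (∑ i, a i * x i)^4/9)/3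
      ≤ ∫ x in cube d,
        (max ((∑ i, a i * x i) - 1/2) 0 + max (-(∑ i, a i * x i) - 1/2) 0) := by
    have cP : Continuous (fun x : Fin d → ℝ =>
        ((∑ i, a i * x i)^2 - (26/15*(∑ i, a i * x i)^2 + 15/26)/4 - (∑ i, a i * x i)^4/9)/3) := by
      have h : Continuous (fun u : ℝ => (u^2 - (26/15*u^2 + 15/26)/4 - u^4/9)/3) := by fun_prop
      exact h.comp (contS a)
    exact setIntegral_mono_on (IC _ cP)
      ((IC _ (hcontmax2.add hcontmax3))) hmeasC fun x _ => pointwise _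
  have hsum : ∫ x in cube d,
      (max ((∑ i, a i * x i) - 1/2) 0 + max (-(∑ i, a i * x i) - 1/2) 0)
      = (∫ x in cube d, max ((∑ i, a i * x i) - 1/2) 0)
        + ∫ x in cube d, max (-(∑ i, a i * x i) - 1/2) 0 :=
    integral_add (IC _ hcontmax2) (IC _ hcontmax3)
  have hfinal : vA * (1/1000) ≤ ∫ x in A, (∑ i, a i * x i - t) := by
    have h2d : vA * (1/1000) ≤ 2^d * (1/1000) := by nlinarith
    linarith [hPval, hptint, hsum, hsymm, hmono, hN, h2d]
  rw [ge_iff_le, le_div_iff₀ hvA_pos, hsplit]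
  nlinarith [hfinal, hvA_pos]
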